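/- Let N be a prime, s ≥ 2, and let f₀ : ℤ/Nℤ → ℂ and f₁, …, f_m : (ℤ/Nℤ)² → ℂ be one-bounded functions. Define F(x) = 𝔼_y f₀(y) ∏_{i=1}^m f_i(x,y), and for h ∈ ℤ/Nℤ define F_h(x) = 𝔼_y ∏_{i=1}^m conj(f_i(x+h, y)) f_i(x, y). Then ‖F‖_{U^s}^{2^{s+1}} ≤ 𝔼_{h∈ℤ/Nℤ} ‖F_h‖_{U^{s-1}}^{2^{s-1}}. -/

import Mathlib

open Finset

noncomputable section

/-- The number of nonzero coordinates of `ω ∈ {0,1}^s`. -/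
def wt {s : ℕ} (ω : Fin s → Bool) : ℕ := (Finset.univ.filter fun i => ω i = true).card

/-- `C^k z`: complex conjugation applied `k` times. -/
def cconj (k : ℕ) (z : ℂ) : ℂ := if Even k then z else (starRingEnd ℂ) z

/-- The Gowers `U^s` norm of `f : ZMod N → ℂ`. -/
def gowers {N : ℕ} [NeZero N] (s : ℕ) (f : ZMod N → ℂ) : ℝ :=
  (‖(∑ x : ZMod N, ∑ h : Fin s → ZMod N,
      ∏ ω : Fin s → Bool,
        cconj (wt ω) (f (x + ∑ i, if ω i then h i else 0))) / (N : ℂ) ^ (s + 1)‖) ^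
    (((2 : ℝ) ^ s)⁻¹)

set_option maxHeartbeats 4000000

lemma cconj_mul (k : ℕ) (a b : ℂ) : cconj k (a*b) = cconj k a * cconj k b := by
  unfold cconj; split <;> simp

lemma cconj_conj (k : ℕ) (z : ℂ) : cconj k ((starRingEnd ℂ) z) = (starRingEnd ℂ) (cconj k z) := by
  unfold cconj; split <;> simp

lemma cconj_one_add (k : ℕ) (z : ℂ) : cconj (1+k) z = (starRingEnd ℂ) (cconj k z) := by
  unfold cconj
  rcases Nat.even_or_odd k with h | h
  · have h1 : ¬ Even (1 + k) := by rw [Nat.add_comm, Nat.even_add_one]; exact not_not_intro h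
    rw [if_neg h1, if_pos h]
  · have h1 : Even (1 + k) := by rw [Nat.add_comm, Nat.even_add_one]; exact Nat.not_even_iff_odd.2 h
    rw [if_pos h1, if_neg (Nat.not_even_iff_odd.2 h)]
    exact (Complex.conj_conj z).symm

lemma abs_cconj (k : ℕ) (z : ℂ) : ‖cconj k z‖ = ‖z‖ := by
  unfold cconj; split <;> simp

lemma cconj_sum {α : Type*} (s : Finset α) (k : ℕ) (g : α → ℂ) :
    cconj k (∑ i ∈ s, g i) = ∑ i ∈ s, cconj k (g i) := by
  unfold cconj; split <;> simp

lemma cconj_div_nat (k : ℕ) (z : ℂ) (n : ℕ) : cconj k (z / n) = cconj k z / n := by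
  unfold cconj; split <;> simp [map_div₀]

lemma wt_cons {t : ℕ} (b : Bool) (ω : Fin t → Bool) :
    wt (Fin.cons b ω) = (if b then 1 else 0) + wt ω := by
  unfold wt
  rw [Finset.card_filter, Finset.card_filter, Fin.sum_univ_succ]
  simp

def dt {N t : ℕ} (ω : Fin t → Bool) (k : Fin t → ZMod N) : ZMod N := ∑ i, if ω i then k i else 0

lemma dt_cons {N t : ℕ} (b : Bool) (ω : Fin t → Bool) (a : ZMod N) (k : Fin t → ZMod N) :
    dt (Fin.cons b ω) (Fin.cons a k) = (if b then a else 0) + dt ω k := by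
  unfold dt
  rw [Fin.sum_univ_succ]
  simp

lemma cconj_cons_false {t : ℕ} (ω : Fin t → Bool) (z : ℂ) :
    cconj (wt (Fin.cons false ω)) z = cconj (wt ω) z := by
  rw [wt_cons]; simp

lemma cconj_cons_true {t : ℕ} (ω : Fin t → Bool) (z : ℂ) :
    cconj (wt (Fin.cons true ω)) z = (starRingEnd ℂ) (cconj (wt ω) z) := by
  rw [wt_cons]; simpa using cconj_one_add (wt ω) z

lemma pair_sum {N : ℕ} [NeZero N] (g : ZMod N → ℂ) :
    ∑ x : ZMod N, ∑ a : ZMod N, (starRingEnd ℂ) (g (x+a)) * g x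
      = (∑ x : ZMod N, g x) * (starRingEnd ℂ) (∑ x : ZMod N, g x) := by
  have h1 : ∀ x : ZMod N, ∑ a : ZMod N, (starRingEnd ℂ) (g (x+a))
      = (starRingEnd ℂ) (∑ x : ZMod N, g x) := by
    intro x
    rw [← map_sum]
    congr 1
    exact Fintype.sum_equiv (Equiv.addLeft x) _ _ (fun a => by simp)
  calc ∑ x : ZMod N, ∑ a : ZMod N, (starRingEnd ℂ) (g (x+a)) * g x
      = ∑ x : ZMod N, (∑ a : ZMod N, (starRingEnd ℂ) (g (x+a))) * g x := by
        refine Finset.sum_congr rfl fun x _ => ?_; rw [Finset.sum_mul]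
    _ = ∑ x : ZMod N, (starRingEnd ℂ) (∑ x : ZMod N, g x) * g x := by
        refine Finset.sum_congr rfl fun x _ => ?_; rw [h1 x]
    _ = _ := by rw [← Finset.mul_sum, mul_comm]

lemma step1 {N : ℕ} [NeZero N] (t : ℕ) (F : ZMod N → ℂ) :
    ∑ x : ZMod N, ∑ h : Fin (t+1) → ZMod N,
      ∏ ω : Fin (t+1) → Bool, cconj (wt ω) (F (x + dt ω h))
    = ∑ k : Fin t → ZMod N,
        (∑ x : ZMod N, ∏ ω : Fin t → Bool, cconj (wt ω) (F (x + dt ω k)))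
        * (starRingEnd ℂ) (∑ x : ZMod N, ∏ ω : Fin t → Bool, cconj (wt ω) (F (x + dt ω k))) := by
  have key : ∀ (x a : ZMod N) (k : Fin t → ZMod N),
      (∏ ω : Fin (t+1) → Bool, cconj (wt ω) (F (x + dt ω (Fin.cons a k))))
        = (starRingEnd ℂ) (∏ ω : Fin t → Bool, cconj (wt ω) (F ((x+a) + dt ω k)))
          * ∏ ω : Fin t → Bool, cconj (wt ω) (F (x + dt ω k)) := by
    intro x a k
    have e2 := Fintype.prod_equiv (Fin.consEquiv fun _ => Bool)
      (fun q : Bool × (Fin t → Bool) =>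
        cconj (wt (Fin.cons q.1 q.2)) (F (x + dt (Fin.cons q.1 q.2) (Fin.cons a k))))
      (fun ω => cconj (wt ω) (F (x + dt ω (Fin.cons a k)))) (fun q => rfl)
    rw [← e2, Fintype.prod_prod_type, Fintype.prod_bool, map_prod]
    dsimp only
    congr 1
    · refine Finset.prod_congr rfl fun ω _ => ?_
      simp [dt_cons, cconj_cons_true, ← add_assoc]
    · refine Finset.prod_congr rfl fun ω _ => ?_
      simp [dt_cons, cconj_cons_false]
  calc ∑ x : ZMod N, ∑ h : Fin (t+1) → ZMod N,
        ∏ ω : Fin (t+1) → Bool, cconj (wt ω) (F (x + dt ω h))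
      = ∑ x : ZMod N, ∑ p : ZMod N × (Fin t → ZMod N),
          ∏ ω : Fin (t+1) → Bool, cconj (wt ω) (F (x + dt ω (Fin.cons p.1 p.2))) := by
        refine Finset.sum_congr rfl fun x _ => ?_
        exact (Fintype.sum_equiv (Fin.consEquiv fun _ => ZMod N)
          (fun p : ZMod N × (Fin t → ZMod N) =>
            ∏ ω : Fin (t+1) → Bool, cconj (wt ω) (F (x + dt ω (Fin.cons p.1 p.2))))
          (fun h => ∏ ω : Fin (t+1) → Bool, cconj (wt ω) (F (x + dt ω h))) (fun p => rfl)).symm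
    _ = ∑ x : ZMod N, ∑ a : ZMod N, ∑ k : Fin t → ZMod N,
          (starRingEnd ℂ) (∏ ω : Fin t → Bool, cconj (wt ω) (F ((x+a) + dt ω k)))
          * ∏ ω : Fin t → Bool, cconj (wt ω) (F (x + dt ω k)) := by
        refine Finset.sum_congr rfl fun x _ => ?_
        rw [Fintype.sum_prod_type]
        exact Finset.sum_congr rfl fun a _ => Finset.sum_congr rfl fun k _ => key x a k
    _ = ∑ x : ZMod N, ∑ k : Fin t → ZMod N, ∑ a : ZMod N,
          (starRingEnd ℂ) (∏ ω : Fin t → Bool, cconj (wt ω) (F ((x+a) + dt ω k)))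
          * ∏ ω : Fin t → Bool, cconj (wt ω) (F (x + dt ω k)) := by
        exact Finset.sum_congr rfl fun x _ => Finset.sum_comm
    _ = ∑ k : Fin t → ZMod N, ∑ x : ZMod N, ∑ a : ZMod N,
          (starRingEnd ℂ) (∏ ω : Fin t → Bool, cconj (wt ω) (F ((x+a) + dt ω k)))
          * ∏ ω : Fin t → Bool, cconj (wt ω) (F (x + dt ω k)) := Finset.sum_comm
    _ = _ := Finset.sum_congr rfl fun k _ =>
        pair_sum (fun z => ∏ ω : Fin t → Bool, cconj (wt ω) (F (z + dt ω k)))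

lemma card_bfun (t : ℕ) : (Finset.univ : Finset (Fin t → Bool)).card = 2 ^ t := by
  simp [Finset.card_univ]

lemma step2 {N : ℕ} [NeZero N] (t m : ℕ) (f₀ : ZMod N → ℂ) (f : Fin m → ZMod N → ZMod N → ℂ)
    (k : Fin t → ZMod N) :
    ∑ x : ZMod N, ∏ ω : Fin t → Bool,
        cconj (wt ω) ((∑ y : ZMod N, f₀ y * ∏ i, f i (x + dt ω k) y) / (N:ℂ))
      = (∑ Y : (Fin t → Bool) → ZMod N,
          (∏ ω : Fin t → Bool, cconj (wt ω) (f₀ (Y ω))) *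
          ∑ x : ZMod N, ∏ ω : Fin t → Bool, cconj (wt ω) (∏ i, f i (x + dt ω k) (Y ω)))
        / (N:ℂ) ^ (2^t) := by
  have hx : ∀ x : ZMod N,
      (∏ ω : Fin t → Bool,
        cconj (wt ω) ((∑ y : ZMod N, f₀ y * ∏ i, f i (x + dt ω k) y) / (N:ℂ)))
      = (∑ Y : (Fin t → Bool) → ZMod N,
          (∏ ω : Fin t → Bool, cconj (wt ω) (f₀ (Y ω))) *
          ∏ ω : Fin t → Bool, cconj (wt ω) (∏ i, f i (x + dt ω k) (Y ω))) / (N:ℂ)^(2^t) := by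
    intro x
    calc ∏ ω : Fin t → Bool,
          cconj (wt ω) ((∑ y : ZMod N, f₀ y * ∏ i, f i (x + dt ω k) y) / (N:ℂ))
        = ∏ ω : Fin t → Bool,
            (∑ y : ZMod N, cconj (wt ω) (f₀ y) * cconj (wt ω) (∏ i, f i (x + dt ω k) y))
              / (N:ℂ) := by
          refine Finset.prod_congr rfl fun ω _ => ?_
          rw [cconj_div_nat, cconj_sum]
          exact congrArg (· / (N:ℂ)) (Finset.sum_congr rfl fun y _ => cconj_mul _ _ _)
      _ = (∏ ω : Fin t → Bool,
            ∑ y : ZMod N, cconj (wt ω) (f₀ y) * cconj (wt ω) (∏ i, f i (x + dt ω k) y))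
              / (N:ℂ)^(2^t) := by
          rw [Finset.prod_div_distrib, Finset.prod_const, card_bfun]
      _ = (∑ Y : (Fin t → Bool) → ZMod N, ∏ ω : Fin t → Bool,
            cconj (wt ω) (f₀ (Y ω)) * cconj (wt ω) (∏ i, f i (x + dt ω k) (Y ω)))
              / (N:ℂ)^(2^t) := by
          rw [Finset.prod_univ_sum]
          rw [Fintype.piFinset_univ]
      _ = _ := by
          congr 1
          exact Finset.sum_congr rfl fun Y _ => Finset.prod_mul_distrib
  calc ∑ x : ZMod N, ∏ ω : Fin t → Bool,
        cconj (wt ω) ((∑ y : ZMod N, f₀ y * ∏ i, f i (x + dt ω k) y) / (N:ℂ))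
      = ∑ x : ZMod N, (∑ Y : (Fin t → Bool) → ZMod N,
          (∏ ω : Fin t → Bool, cconj (wt ω) (f₀ (Y ω))) *
          ∏ ω : Fin t → Bool, cconj (wt ω) (∏ i, f i (x + dt ω k) (Y ω))) / (N:ℂ)^(2^t) :=
        Finset.sum_congr rfl fun x _ => hx x
    _ = (∑ x : ZMod N, ∑ Y : (Fin t → Bool) → ZMod N,
          (∏ ω : Fin t → Bool, cconj (wt ω) (f₀ (Y ω))) *
          ∏ ω : Fin t → Bool, cconj (wt ω) (∏ i, f i (x + dt ω k) (Y ω))) / (N:ℂ)^(2^t) := by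
        rw [Finset.sum_div]
    _ = (∑ Y : (Fin t → Bool) → ZMod N, ∑ x : ZMod N,
          (∏ ω : Fin t → Bool, cconj (wt ω) (f₀ (Y ω))) *
          ∏ ω : Fin t → Bool, cconj (wt ω) (∏ i, f i (x + dt ω k) (Y ω))) / (N:ℂ)^(2^t) := by
        congr 1
        exact Finset.sum_comm
    _ = _ := by
        congr 1
        exact Finset.sum_congr rfl fun Y _ => (Finset.mul_sum _ _ _).symm

lemma step3 {N : ℕ} [NeZero N] (t m : ℕ) (f : Fin m → ZMod N → ZMod N → ℂ) :
    ∑ h : ZMod N, ∑ x : ZMod N, ∑ k : Fin t → ZMod N, ∏ ω : Fin t → Bool,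
        cconj (wt ω) ((∑ y : ZMod N,
          ∏ i, (starRingEnd ℂ) (f i (x + dt ω k + h) y) * f i (x + dt ω k) y) / (N:ℂ))
      = (∑ k : Fin t → ZMod N, ∑ Y : (Fin t → Bool) → ZMod N,
          (∑ x : ZMod N, ∏ ω : Fin t → Bool, cconj (wt ω) (∏ i, f i (x + dt ω k) (Y ω))) *
          (starRingEnd ℂ)
            (∑ x : ZMod N, ∏ ω : Fin t → Bool, cconj (wt ω) (∏ i, f i (x + dt ω k) (Y ω))))
        / (N:ℂ) ^ (2^t) := by
  have hterm : ∀ (h x : ZMod N) (k : Fin t → ZMod N),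
      (∏ ω : Fin t → Bool, cconj (wt ω) ((∑ y : ZMod N,
          ∏ i, (starRingEnd ℂ) (f i (x + dt ω k + h) y) * f i (x + dt ω k) y) / (N:ℂ)))
      = (∑ Y : (Fin t → Bool) → ZMod N,
          (starRingEnd ℂ)
            (∏ ω : Fin t → Bool, cconj (wt ω) (∏ i, f i ((x+h) + dt ω k) (Y ω))) *
          ∏ ω : Fin t → Bool, cconj (wt ω) (∏ i, f i (x + dt ω k) (Y ω))) / (N:ℂ)^(2^t) := by
    intro h x k
    calc ∏ ω : Fin t → Bool, cconj (wt ω) ((∑ y : ZMod N,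
            ∏ i, (starRingEnd ℂ) (f i (x + dt ω k + h) y) * f i (x + dt ω k) y) / (N:ℂ))
        = ∏ ω : Fin t → Bool, (∑ y : ZMod N,
            (starRingEnd ℂ) (cconj (wt ω) (∏ i, f i ((x+h) + dt ω k) y)) *
            cconj (wt ω) (∏ i, f i (x + dt ω k) y)) / (N:ℂ) := by
          refine Finset.prod_congr rfl fun ω _ => ?_
          rw [cconj_div_nat, cconj_sum]
          refine congrArg (· / (N:ℂ)) (Finset.sum_congr rfl fun y _ => ?_)
          rw [Finset.prod_mul_distrib, cconj_mul]
          congr 1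
          rw [← map_prod, cconj_conj]
          congr 2
          rw [add_right_comm]
      _ = (∏ ω : Fin t → Bool, ∑ y : ZMod N,
            (starRingEnd ℂ) (cconj (wt ω) (∏ i, f i ((x+h) + dt ω k) y)) *
            cconj (wt ω) (∏ i, f i (x + dt ω k) y)) / (N:ℂ)^(2^t) := by
          rw [Finset.prod_div_distrib, Finset.prod_const, card_bfun]
      _ = (∑ Y : (Fin t → Bool) → ZMod N, ∏ ω : Fin t → Bool,
            (starRingEnd ℂ) (cconj (wt ω) (∏ i, f i ((x+h) + dt ω k) (Y ω))) *
            cconj (wt ω) (∏ i, f i (x + dt ω k) (Y ω))) / (N:ℂ)^(2^t) := by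
          rw [Finset.prod_univ_sum, Fintype.piFinset_univ]
      _ = _ := by
          congr 1
          refine Finset.sum_congr rfl fun Y _ => ?_
          rw [Finset.prod_mul_distrib, ← map_prod]
  calc ∑ h : ZMod N, ∑ x : ZMod N, ∑ k : Fin t → ZMod N, ∏ ω : Fin t → Bool,
        cconj (wt ω) ((∑ y : ZMod N,
          ∏ i, (starRingEnd ℂ) (f i (x + dt ω k + h) y) * f i (x + dt ω k) y) / (N:ℂ))
      = ∑ h : ZMod N, ∑ x : ZMod N, ∑ k : Fin t → ZMod N,
          (∑ Y : (Fin t → Bool) → ZMod N,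
            (starRingEnd ℂ)
              (∏ ω : Fin t → Bool, cconj (wt ω) (∏ i, f i ((x+h) + dt ω k) (Y ω))) *
            ∏ ω : Fin t → Bool, cconj (wt ω) (∏ i, f i (x + dt ω k) (Y ω))) / (N:ℂ)^(2^t) :=
        Finset.sum_congr rfl fun h _ => Finset.sum_congr rfl fun x _ =>
          Finset.sum_congr rfl fun k _ => hterm h x k
    _ = (∑ k : Fin t → ZMod N, ∑ Y : (Fin t → Bool) → ZMod N, ∑ x : ZMod N, ∑ h : ZMod N,
          (starRingEnd ℂ)
            (∏ ω : Fin t → Bool, cconj (wt ω) (∏ i, f i ((x+h) + dt ω k) (Y ω))) *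
          ∏ ω : Fin t → Bool, cconj (wt ω) (∏ i, f i (x + dt ω k) (Y ω))) / (N:ℂ)^(2^t) := by
        simp only [← Finset.sum_div]
        congr 1
        calc ∑ h : ZMod N, ∑ x : ZMod N, ∑ k : Fin t → ZMod N,
              ∑ Y : (Fin t → Bool) → ZMod N,
              (starRingEnd ℂ)
                (∏ ω : Fin t → Bool, cconj (wt ω) (∏ i, f i ((x+h) + dt ω k) (Y ω))) *
              ∏ ω : Fin t → Bool, cconj (wt ω) (∏ i, f i (x + dt ω k) (Y ω))
            = ∑ x : ZMod N, ∑ h : ZMod N, ∑ k : Fin t → ZMod N,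
              ∑ Y : (Fin t → Bool) → ZMod N,
              (starRingEnd ℂ)
                (∏ ω : Fin t → Bool, cconj (wt ω) (∏ i, f i ((x+h) + dt ω k) (Y ω))) *
              ∏ ω : Fin t → Bool, cconj (wt ω) (∏ i, f i (x + dt ω k) (Y ω)) :=
              Finset.sum_comm
          _ = ∑ x : ZMod N, ∑ k : Fin t → ZMod N, ∑ Y : (Fin t → Bool) → ZMod N, ∑ h : ZMod N,
              (starRingEnd ℂ)
                (∏ ω : Fin t → Bool, cconj (wt ω) (∏ i, f i ((x+h) + dt ω k) (Y ω))) *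
              ∏ ω : Fin t → Bool, cconj (wt ω) (∏ i, f i (x + dt ω k) (Y ω)) := by
              refine Finset.sum_congr rfl fun x _ => ?_
              calc ∑ h : ZMod N, ∑ k : Fin t → ZMod N, ∑ Y : (Fin t → Bool) → ZMod N,
                    (starRingEnd ℂ)
                      (∏ ω : Fin t → Bool, cconj (wt ω) (∏ i, f i ((x+h) + dt ω k) (Y ω))) *
                    ∏ ω : Fin t → Bool, cconj (wt ω) (∏ i, f i (x + dt ω k) (Y ω))
                  = ∑ k : Fin t → ZMod N, ∑ h : ZMod N, ∑ Y : (Fin t → Bool) → ZMod N,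
                    (starRingEnd ℂ)
                      (∏ ω : Fin t → Bool, cconj (wt ω) (∏ i, f i ((x+h) + dt ω k) (Y ω))) *
                    ∏ ω : Fin t → Bool, cconj (wt ω) (∏ i, f i (x + dt ω k) (Y ω)) :=
                    Finset.sum_comm
                _ = _ := Finset.sum_congr rfl fun k _ => Finset.sum_comm
          _ = ∑ k : Fin t → ZMod N, ∑ x : ZMod N, ∑ Y : (Fin t → Bool) → ZMod N, ∑ h : ZMod N,
              (starRingEnd ℂ)
                (∏ ω : Fin t → Bool, cconj (wt ω) (∏ i, f i ((x+h) + dt ω k) (Y ω))) *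
              ∏ ω : Fin t → Bool, cconj (wt ω) (∏ i, f i (x + dt ω k) (Y ω)) :=
              Finset.sum_comm
          _ = _ := Finset.sum_congr rfl fun k _ => Finset.sum_comm
    _ = _ := by
        congr 1
        refine Finset.sum_congr rfl fun k _ => Finset.sum_congr rfl fun Y _ => ?_
        exact pair_sum (fun z => ∏ ω : Fin t → Bool, cconj (wt ω) (∏ i, f i (z + dt ω k) (Y ω)))

lemma rpow_aux (x : ℝ) (hx : 0 ≤ x) (t : ℕ) :
    (x ^ (((2:ℝ)^t)⁻¹)) ^ ((2:ℕ)^t) = x := by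
  rw [← Real.rpow_natCast (x ^ (((2:ℝ)^t)⁻¹)) (2^t), ← Real.rpow_mul hx]
  push_cast
  rw [inv_mul_cancel₀ (by positivity), Real.rpow_one]

lemma rpow_aux2 (x : ℝ) (hx : 0 ≤ x) (t : ℕ) :
    (x ^ (((2:ℝ)^t)⁻¹)) ^ ((2:ℕ)^(t+1)) = x ^ 2 := by
  rw [pow_succ, pow_mul, rpow_aux x hx t]


lemma key1' {N : ℕ} [NeZero N] (t m : ℕ) (f₀ : ZMod N → ℂ) (f : Fin m → ZMod N → ZMod N → ℂ)
    (hf₀ : ∀ y, ‖f₀ y‖ ≤ 1) :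
    ‖∑ x : ZMod N, ∑ h : Fin (t+1) → ZMod N, ∏ ω : Fin (t+1) → Bool,
        cconj (wt ω) ((∑ y : ZMod N, f₀ y * ∏ i, f i (x + dt ω h) y) / (N:ℂ))‖
      ≤ ∑ h : ZMod N, ‖∑ x : ZMod N, ∑ k : Fin t → ZMod N, ∏ ω : Fin t → Bool,
          cconj (wt ω) ((∑ y : ZMod N,
            ∏ i, (starRingEnd ℂ) (f i (x + dt ω k + h) y) * f i (x + dt ω k) y) / (N:ℂ))‖ := by
  have hN0 : (0:ℝ) < N := by exact_mod_cast Nat.pos_of_ne_zero (NeZero.ne N)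
  have hNp : (0:ℝ) < (N:ℝ)^(2^t) := by positivity
  set S1 : ℂ := ∑ x : ZMod N, ∑ h : Fin (t+1) → ZMod N, ∏ ω : Fin (t+1) → Bool,
      cconj (wt ω) ((∑ y : ZMod N, f₀ y * ∏ i, f i (x + dt ω h) y) / (N:ℂ)) with hS1
  set Sh : ZMod N → ℂ := fun h => ∑ x : ZMod N, ∑ k : Fin t → ZMod N, ∏ ω : Fin t → Bool,
      cconj (wt ω) ((∑ y : ZMod N,
        ∏ i, (starRingEnd ℂ) (f i (x + dt ω k + h) y) * f i (x + dt ω k) y) / (N:ℂ)) with hSh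
  set EA : (Fin t → ZMod N) → ℂ := fun k => ∑ x : ZMod N, ∏ ω : Fin t → Bool,
      cconj (wt ω) ((∑ y : ZMod N, f₀ y * ∏ i, f i (x + dt ω k) y) / (N:ℂ)) with hEA
  set DD : (Fin t → ZMod N) → ((Fin t → Bool) → ZMod N) → ℂ := fun k Y =>
      ∑ x : ZMod N, ∏ ω : Fin t → Bool, cconj (wt ω) (∏ i, f i (x + dt ω k) (Y ω)) with hDD
  set CC : ((Fin t → Bool) → ZMod N) → ℂ := fun Y =>
      ∏ ω : Fin t → Bool, cconj (wt ω) (f₀ (Y ω)) with hCC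
  set RD : ℝ := ∑ k : Fin t → ZMod N, ∑ Y : (Fin t → Bool) → ZMod N,
      ‖DD k Y‖ ^ 2 with hRD
  have cardY : ((Finset.univ : Finset ((Fin t → Bool) → ZMod N)).card : ℝ) = (N:ℝ)^(2^t) := by
    rw [Finset.card_univ]
    rw [show Fintype.card ((Fin t → Bool) → ZMod N) = N ^ (2^t) by
      simp [Fintype.card_fun, ZMod.card]]
    push_cast; ring
  have hA : S1 = ∑ k : Fin t → ZMod N, EA k * (starRingEnd ℂ) (EA k) :=
    step1 t (fun x => (∑ y : ZMod N, f₀ y * ∏ i, f i x y) / (N:ℂ))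
  have hB : ∀ k, EA k = (∑ Y : (Fin t → Bool) → ZMod N, CC Y * DD k Y) / (N:ℂ)^(2^t) :=
    fun k => step2 t m f₀ f k
  have habsEA : ∀ k, ‖EA k‖ ^ 2
      ≤ (∑ Y : (Fin t → Bool) → ZMod N, ‖DD k Y‖^2) / (N:ℝ)^(2^t) := by
    intro k
    have h1 : ‖EA k‖
        = ‖∑ Y : (Fin t → Bool) → ZMod N, CC Y * DD k Y‖ / (N:ℝ)^(2^t) := by
      rw [hB k, norm_div, norm_pow, Complex.norm_natCast]
    have h2 : ‖∑ Y : (Fin t → Bool) → ZMod N, CC Y * DD k Y‖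
        ≤ ∑ Y : (Fin t → Bool) → ZMod N, ‖DD k Y‖ := by
      refine le_trans (norm_sum_le _ _) (Finset.sum_le_sum fun Y _ => ?_)
      rw [norm_mul]
      have hc : ‖CC Y‖ ≤ 1 := by
        rw [hCC]
        rw [norm_prod]
        refine Finset.prod_le_one (fun ω _ => norm_nonneg _) (fun ω _ => ?_)
        rw [abs_cconj]; exact hf₀ _
      exact mul_le_of_le_one_left (norm_nonneg _) hc
    have h3 : (∑ Y : (Fin t → Bool) → ZMod N, ‖DD k Y‖)^2
        ≤ (N:ℝ)^(2^t) * ∑ Y : (Fin t → Bool) → ZMod N, ‖DD k Y‖^2 := by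
      have := sq_sum_le_card_mul_sum_sq
        (s := (Finset.univ : Finset ((Fin t → Bool) → ZMod N)))
        (f := fun Y => ‖DD k Y‖)
      rwa [cardY] at this
    calc ‖EA k‖ ^ 2
        = ‖∑ Y : (Fin t → Bool) → ZMod N, CC Y * DD k Y‖^2 / ((N:ℝ)^(2^t))^2 := by
          rw [h1, div_pow]
      _ ≤ (∑ Y : (Fin t → Bool) → ZMod N, ‖DD k Y‖)^2 / ((N:ℝ)^(2^t))^2 := by
          gcongr
      _ ≤ ((N:ℝ)^(2^t) * ∑ Y : (Fin t → Bool) → ZMod N, ‖DD k Y‖^2)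
            / ((N:ℝ)^(2^t))^2 := by gcongr
      _ = (∑ Y : (Fin t → Bool) → ZMod N, ‖DD k Y‖^2) / (N:ℝ)^(2^t) := by
          rw [sq ((N:ℝ)^(2^t)), mul_div_mul_left _ _ (ne_of_gt hNp)]
  have habsS1 : ‖S1‖ = ∑ k : Fin t → ZMod N, ‖EA k‖^2 := by
    have e : S1 = (((∑ k : Fin t → ZMod N, ‖EA k‖^2 : ℝ)) : ℂ) := by
      rw [hA]
      push_cast
      refine Finset.sum_congr rfl fun k _ => ?_
      rw [Complex.mul_conj, ← Complex.sq_norm]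
      push_cast
      ring
    rw [e, Complex.norm_real, Real.norm_eq_abs, abs_of_nonneg (Finset.sum_nonneg fun k _ => sq_nonneg _)]
  have hRsum : ∑ h : ZMod N, Sh h = (((RD / (N:ℝ)^(2^t) : ℝ)) : ℂ) := by
    have e4 : ∑ h : ZMod N, Sh h
        = (∑ k : Fin t → ZMod N, ∑ Y : (Fin t → Bool) → ZMod N,
            DD k Y * (starRingEnd ℂ) (DD k Y)) / (N:ℂ)^(2^t) := step3 t m f
    rw [e4, hRD]
    push_cast
    congr 1
    refine Finset.sum_congr rfl fun k _ => Finset.sum_congr rfl fun Y _ => ?_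
    rw [Complex.mul_conj, ← Complex.sq_norm]
    push_cast
    ring
  have h6 : ‖S1‖ ≤ RD / (N:ℝ)^(2^t) := by
    rw [habsS1, hRD, Finset.sum_div]
    exact Finset.sum_le_sum fun k _ => habsEA k
  have hRD0 : (0:ℝ) ≤ RD := by
    rw [hRD]
    exact Finset.sum_nonneg fun k _ => Finset.sum_nonneg fun Y _ => sq_nonneg _
  have h7 : RD / (N:ℝ)^(2^t) ≤ ∑ h : ZMod N, ‖Sh h‖ := by
    have e5 : (RD / (N:ℝ)^(2^t) : ℝ) = ‖∑ h : ZMod N, Sh h‖ := by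
      rw [hRsum, Complex.norm_real, Real.norm_eq_abs, abs_of_nonneg (div_nonneg hRD0 (by positivity))]
    rw [e5]
    exact norm_sum_le _ _
  exact le_trans h6 h7

lemma dt_fold {N t : ℕ} (ω : Fin t → Bool) (k : Fin t → ZMod N) :
    (∑ i, if ω i then k i else 0 : ZMod N) = dt ω k := rfl

lemma key2' {N : ℕ} [NeZero N] (t m : ℕ) (f₀ : ZMod N → ℂ) (f : Fin m → ZMod N → ZMod N → ℂ)
    (hf₀ : ∀ y, ‖f₀ y‖ ≤ 1)
    (hf : ∀ i x y, ‖f i x y‖ ≤ 1) :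
    ‖∑ x : ZMod N, ∑ h : Fin (t+1) → ZMod N, ∏ ω : Fin (t+1) → Bool,
        cconj (wt ω) ((∑ y : ZMod N, f₀ y * ∏ i, f i (x + dt ω h) y) / (N:ℂ))‖
      ≤ (N:ℝ)^(t+1+1) := by
  have hN0 : (0:ℝ) < N := by exact_mod_cast Nat.pos_of_ne_zero (NeZero.ne N)
  have hFb : ∀ z : ZMod N, ‖(∑ y : ZMod N, f₀ y * ∏ i, f i z y) / (N:ℂ)‖ ≤ 1 := by
    intro z
    rw [norm_div, Complex.norm_natCast]
    refine div_le_one_of_le₀ ?_ (le_of_lt hN0)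
    calc ‖∑ y : ZMod N, f₀ y * ∏ i, f i z y‖
        ≤ ∑ y : ZMod N, ‖f₀ y * ∏ i, f i z y‖ := norm_sum_le _ _
      _ ≤ ∑ _y : ZMod N, (1:ℝ) := by
          refine Finset.sum_le_sum fun y _ => ?_
          rw [norm_mul]
          have h1 : ‖∏ i, f i z y‖ ≤ 1 := by
            rw [norm_prod]
            exact Finset.prod_le_one (fun i _ => norm_nonneg _)
              (fun i _ => hf i z y)
          calc ‖f₀ y‖ * ‖∏ i, f i z y‖
              ≤ 1 * 1 := mul_le_mul (hf₀ y) h1 (norm_nonneg _) zero_le_one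
            _ = 1 := one_mul 1
      _ = (N:ℝ) := by simp [Finset.sum_const, Finset.card_univ, ZMod.card]
  calc ‖∑ x : ZMod N, ∑ h : Fin (t+1) → ZMod N, ∏ ω : Fin (t+1) → Bool,
        cconj (wt ω) ((∑ y : ZMod N, f₀ y * ∏ i, f i (x + dt ω h) y) / (N:ℂ))‖
      ≤ ∑ x : ZMod N, ‖∑ h : Fin (t+1) → ZMod N, ∏ ω : Fin (t+1) → Bool,
          cconj (wt ω) ((∑ y : ZMod N, f₀ y * ∏ i, f i (x + dt ω h) y) / (N:ℂ))‖ :=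
        norm_sum_le _ _
    _ ≤ ∑ x : ZMod N, ∑ h : Fin (t+1) → ZMod N, ‖∏ ω : Fin (t+1) → Bool,
          cconj (wt ω) ((∑ y : ZMod N, f₀ y * ∏ i, f i (x + dt ω h) y) / (N:ℂ))‖ :=
        Finset.sum_le_sum fun x _ => norm_sum_le _ _
    _ ≤ ∑ _x : ZMod N, ∑ _h : Fin (t+1) → ZMod N, (1:ℝ) := by
        refine Finset.sum_le_sum fun x _ => Finset.sum_le_sum fun h _ => ?_
        rw [norm_prod]
        refine Finset.prod_le_one (fun ω _ => norm_nonneg _) (fun ω _ => ?_)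
        rw [abs_cconj]
        exact hFb _
    _ = (N:ℝ)^(t+1+1) := by
        rw [Finset.sum_const, Finset.sum_const, Finset.card_univ, Finset.card_univ]
        rw [show Fintype.card (Fin (t+1) → ZMod N) = N^(t+1) by
          simp [Fintype.card_fun, ZMod.card]]
        rw [ZMod.card]
        push_cast
        ring

lemma final_arith (a r n : ℝ) (hn : 0 < n) (ha : 0 ≤ a) (hr : 0 ≤ r) (h1 : a ≤ r) (h2 : a ≤ n) :
    (a/n)^2 ≤ r/n := by
  have h3 : a/n ≤ 1 := div_le_one_of_le₀ h2 hn.le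
  have h4 : a/n ≤ r/n := by gcongr
  calc (a/n)^2 = (a/n)*(a/n) := sq _
    _ ≤ 1 * (r/n) := mul_le_mul h3 h4 (by positivity) zero_le_one
    _ = r/n := one_mul _

set_option maxHeartbeats 4000000 in
theorem stmt12 (N : ℕ) [NeZero N] (hN : Nat.Prime N) (s : ℕ) (hs : 2 ≤ s) (m : ℕ)
    (f₀ : ZMod N → ℂ) (f : Fin m → ZMod N → ZMod N → ℂ)
    (hf₀ : ∀ y, ‖f₀ y‖ ≤ 1)
    (hf : ∀ i x y, ‖f i x y‖ ≤ 1) :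
    gowers s (fun x => (∑ y : ZMod N, f₀ y * ∏ i, f i x y) / (N : ℂ)) ^ (2 ^ (s + 1)) ≤
      (∑ h : ZMod N,
        gowers (s - 1)
          (fun x => (∑ y : ZMod N,
            ∏ i, (starRingEnd ℂ) (f i (x + h) y) * f i x y) / (N : ℂ)) ^ (2 ^ (s - 1))) /
        (N : ℝ) := by
  obtain ⟨t, rfl⟩ : ∃ t, s = t + 1 := ⟨s - 1, by omega⟩
  have hN0 : (0:ℝ) < N := by exact_mod_cast Nat.pos_of_ne_zero (NeZero.ne N)
  simp only [Nat.add_sub_cancel, gowers, dt_fold]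
  simp only [norm_div, norm_pow, Complex.norm_natCast]
  rw [rpow_aux2 _ (by positivity) (t+1)]
  rw [Finset.sum_congr rfl fun (h : ZMod N) _ => rpow_aux _ (by positivity) t]
  rw [← Finset.sum_div, div_div, ← pow_succ]
  exact final_arith _ _ _ (by positivity) (norm_nonneg _)
    (Finset.sum_nonneg fun h _ => norm_nonneg _)
    (key1' t m f₀ f hf₀) (key2' t m f₀ f hf₀ hf)

end
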